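/- Let X be a normed space with a biorthogonal system {e_α; φ_α}_{α∈Γ} such that ‖e_α‖ = 1 and ‖φ_α‖ ≤ M for all α. Let α_1,…,α_n and β_1,…,β_m be indices in Γ (with the α's pairwise distinct and the β's pairwise distinct) such that {α_1,…,α_n} ∩ {β_1,…,β_m} = ∅. Set F = span{e_{α_1},…,e_{α_n}} and G = span{e_{β_1},…,e_{β_m}}. Then for every x ∈ F with ‖x‖ = 1, dist(x, G) ≥ 1/(nM). -/

import Mathlib

open Metric Set

theorem dist_to_disjoint_span_ge {X : Type*} [NormedAddCommGroup X] [NormedSpace ℝ X]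
    {Γ : Type*} [DecidableEq Γ] (e : Γ → X) (φ : Γ → X →L[ℝ] ℝ) (M : ℝ) (hM : 1 ≤ M)
    (hbi : ∀ α β, φ α (e β) = if α = β then 1 else 0)
    (he : ∀ α, ‖e α‖ = 1) (hφ : ∀ α, ‖φ α‖ ≤ M)
    (n m : ℕ) (a : Fin n → Γ) (b : Fin m → Γ)
    (ha : Function.Injective a) (hb : Function.Injective b)
    (hdisj : ∀ i j, a i ≠ b j)
    (x : X) (hxF : x ∈ Submodule.span ℝ (Set.range (e ∘ a))) (hx : ‖x‖ = 1) :
    1 / (n * M) ≤ Metric.infDist x (Submodule.span ℝ (Set.range (e ∘ b)) : Set X) := by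
  rcases Nat.eq_zero_or_pos n with hn | hn
  · subst hn
    simp only [Nat.cast_zero, zero_mul, div_zero]
    exact Metric.infDist_nonneg
  have hnM : (0:ℝ) < n * M := by positivity
  -- write x as a combination
  rw [Submodule.mem_span_range_iff_exists_fun] at hxF
  obtain ⟨c, hc⟩ := hxF
  -- φ (a i) x = c i
  have hφx : ∀ i, φ (a i) x = c i := by
    intro i
    rw [← hc, map_sum]
    have : ∀ j, φ (a i) (c j • (e ∘ a) j) = if i = j then c j else 0 := by
      intro j
      simp only [Function.comp_apply, map_smul, hbi, ha.eq_iff, smul_eq_mul,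
        mul_ite, mul_one, mul_zero]
    simp only [this]
    simp [Finset.sum_ite_eq]
  -- φ (a i) vanishes on G
  have hφG : ∀ i, ∀ y ∈ Submodule.span ℝ (Set.range (e ∘ b)), φ (a i) y = 0 := by
    intro i y hy
    have : Submodule.span ℝ (Set.range (e ∘ b)) ≤ LinearMap.ker (φ (a i) : X →ₗ[ℝ] ℝ) := by
      rw [Submodule.span_le]
      rintro _ ⟨j, rfl⟩
      simp [LinearMap.mem_ker, hbi, hdisj i j]
    exact this hy
  by_contra hcon
  push_neg at hcon
  rw [Metric.infDist_lt_iff ⟨0, Submodule.zero_mem _⟩] at hcon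
  obtain ⟨y, hy, hlt⟩ := hcon
  rw [dist_eq_norm] at hlt
  have key : (1:ℝ) ≤ n * M * ‖x - y‖ := by
    calc (1:ℝ) = ‖x‖ := hx.symm
    _ = ‖∑ i, c i • (e ∘ a) i‖ := by rw [hc]
    _ ≤ ∑ i, ‖c i • (e ∘ a) i‖ := norm_sum_le _ _
    _ = ∑ i, |c i| := by
        simp [norm_smul, he, Real.norm_eq_abs]
    _ = ∑ i : Fin n, |φ (a i) (x - y)| := by
        refine Finset.sum_congr rfl fun i _ => ?_
        rw [map_sub, hφx i, hφG i y hy, sub_zero]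
    _ ≤ ∑ _i : Fin n, M * ‖x - y‖ := by
        refine Finset.sum_le_sum fun i _ => ?_
        calc |φ (a i) (x - y)| ≤ ‖φ (a i)‖ * ‖x - y‖ := (φ (a i)).le_opNorm _
        _ ≤ M * ‖x - y‖ := by
            exact mul_le_mul_of_nonneg_right (hφ _) (norm_nonneg _)
    _ = n * M * ‖x - y‖ := by
        rw [Finset.sum_const, Finset.card_univ, Fintype.card_fin, nsmul_eq_mul, mul_assoc]
  rw [lt_div_iff₀ hnM] at hlt
  nlinarith [key]
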